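/- Let (X₁, X₂, Z) be a basis of R₁ and let φ ∈ 𝕎 be a matrix of the form [[X₁, Z, 0],[q₁₁, q₁₂, Z],[q₂₁, q₂₂, X₁]] with q₁₁, q₁₂, q₂₁, q₂₂ ∈ R₂. Then there exist (ν₁, ν₂) ∈ G, scalars a, b ∈ ℂ, and quadratic forms q′₁₂, q′₂₁ ∈ R₂, where q′₁₂ has zero coefficient of Z² when written in the monomial basis determined by (X₁, X₂, Z), such that ν₂ φ ν₁⁻¹ = [[X₁, Z, 0],[a·X₂², q′₁₂, Z],[q′₂₁, b·X₂², X₁]]. -/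

import Mathlib

open MvPolynomial Matrix

noncomputable section

/-- The polynomial ring `R = ℂ[x₀,x₁,x₂]`. -/
abbrev Rp : Type := MvPolynomial (Fin 3) ℂ

/-- `p` is a linear form. -/
def IsLin (p : Rp) : Prop := p.IsHomogeneous 1

/-- `p` is a quadratic form. -/
def IsQuad (p : Rp) : Prop := p.IsHomogeneous 2

/-- The matrix `ν₁ = [[A, 0],[φ, α]]`. -/
def nu1 (A : Matrix (Fin 2) (Fin 2) ℂ) (α : ℂ) (φ : Fin 2 → Rp) :
    Matrix (Fin 3) (Fin 3) Rp :=
  !![C (A 0 0), C (A 0 1), 0;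
     C (A 1 0), C (A 1 1), 0;
     φ 0, φ 1, C α]

/-- The matrix `ν₂ = [[β, 0],[ψ, B]]`. -/
def nu2 (B : Matrix (Fin 2) (Fin 2) ℂ) (β : ℂ) (ψ : Fin 2 → Rp) :
    Matrix (Fin 3) (Fin 3) Rp :=
  !![C β, 0, 0;
     ψ 0, C (B 0 0), C (B 0 1);
     ψ 1, C (B 1 0), C (B 1 1)]

namespace Stmt10Aux

lemma degree_fin3 (d : Fin 3 →₀ ℕ) : d.degree = d 0 + d 1 + d 2 := by
  rw [Finsupp.degree_apply, Finset.sum_subset (Finset.subset_univ _)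
    (fun x _ hx => Finsupp.notMem_support_iff.1 hx), Fin.sum_univ_three]

lemma deg_one_cases (d : Fin 3 →₀ ℕ) (h : d.degree = 1) :
    d = Finsupp.single 0 1 ∨ d = Finsupp.single 1 1 ∨ d = Finsupp.single 2 1 := by
  rw [degree_fin3] at h
  by_cases h0 : d 0 = 1
  · left; ext i; fin_cases i <;> simp [Finsupp.single_apply] <;> omega
  · by_cases h1 : d 1 = 1
    · right; left; ext i; fin_cases i <;> simp [Finsupp.single_apply] <;> omega
    · right; right; ext i; fin_cases i <;> simp [Finsupp.single_apply] <;> omega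

lemma deg_two_cases (d : Fin 3 →₀ ℕ) (h : d.degree = 2) :
    ∃ i j : Fin 3, d = Finsupp.single i 1 + Finsupp.single j 1 := by
  rw [degree_fin3] at h
  have hcases : (d 0 = 2) ∨ (d 0 = 1 ∧ d 1 = 1) ∨ (d 0 = 1 ∧ d 2 = 1) ∨ (d 1 = 2)
      ∨ (d 1 = 1 ∧ d 2 = 1) ∨ (d 2 = 2) := by omega
  rcases hcases with h'|h'|h'|h'|h'|h'
  · exact ⟨0, 0, by ext i; fin_cases i <;> simp [Finsupp.single_apply] <;> omega⟩
  · exact ⟨0, 1, by ext i; fin_cases i <;> simp [Finsupp.single_apply] <;> omega⟩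
  · exact ⟨0, 2, by ext i; fin_cases i <;> simp [Finsupp.single_apply] <;> omega⟩
  · exact ⟨1, 1, by ext i; fin_cases i <;> simp [Finsupp.single_apply] <;> omega⟩
  · exact ⟨1, 2, by ext i; fin_cases i <;> simp [Finsupp.single_apply] <;> omega⟩
  · exact ⟨2, 2, by ext i; fin_cases i <;> simp [Finsupp.single_apply] <;> omega⟩

lemma degree_single_one (j : Fin 3) : (Finsupp.single j 1 : Fin 3 →₀ ℕ).degree = 1 := by
  rw [degree_fin3]; fin_cases j <;> simp

lemma lin_eq (p : Rp) (hp : IsLin p) :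
    p = ∑ j : Fin 3, C (coeff (Finsupp.single j 1) p) * X j := by
  ext m
  rw [coeff_sum]
  by_cases hm : m.degree = 1
  · rcases deg_one_cases m hm with rfl|rfl|rfl <;>
      simp [coeff_C_mul, coeff_X', Fin.sum_univ_three, Finsupp.single_eq_single_iff]
  · rw [MvPolynomial.IsHomogeneous.coeff_eq_zero hp hm]
    symm
    refine Finset.sum_eq_zero fun j _ => ?_
    rw [coeff_C_mul, coeff_X', if_neg, mul_zero]
    intro hEq
    exact hm (by rw [← hEq]; exact degree_single_one j)

lemma X_mem_span (X₁ X₂ Z : Rp) (hX₁ : IsLin X₁) (hX₂ : IsLin X₂) (hZ : IsLin Z)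
    (hbasis : LinearIndependent ℂ ![X₁, X₂, Z]) (j : Fin 3) :
    X j ∈ Submodule.span ℂ ({X₁, X₂, Z} : Set Rp) := by
  set vv : Fin 3 → Rp := ![X₁, X₂, Z] with hvv
  set M : Matrix (Fin 3) (Fin 3) ℂ :=
    Matrix.of (fun i k => coeff (Finsupp.single k 1) (vv i)) with hM
  have hlin : ∀ i, IsLin (vv i) := by
    intro i; fin_cases i <;> assumption
  have hv : ∀ i, vv i = ∑ k, C (M i k) * X k := fun i => lin_eq _ (hlin i)
  have hdet : M.det ≠ 0 := by
    intro h
    obtain ⟨c, hc0, hcM⟩ := Matrix.exists_vecMul_eq_zero_iff.2 h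
    apply hc0
    have hz : ∑ i, c i • vv i = 0 := by
      calc ∑ i, c i • vv i = ∑ i, ∑ k, C (c i * M i k) * X k := by
            refine Finset.sum_congr rfl fun i _ => ?_
            rw [hv i, smul_eq_C_mul, Finset.mul_sum]
            exact Finset.sum_congr rfl fun k _ => by rw [C_mul, mul_assoc]
        _ = ∑ k, C (∑ i, c i * M i k) * X k := by
            rw [Finset.sum_comm]
            exact Finset.sum_congr rfl fun k _ => by rw [map_sum, Finset.sum_mul]
        _ = 0 := by
            refine Finset.sum_eq_zero fun k _ => ?_
            have hk : ∑ i, c i * M i k = 0 := by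
              have := congrFun hcM k
              simpa [Matrix.vecMul, dotProduct] using this
            rw [hk, map_zero, zero_mul]
    have := Fintype.linearIndependent_iff.1 hbasis c hz
    funext i; exact this i
  have hNM : M⁻¹ * M = 1 := Matrix.nonsing_inv_mul M (isUnit_iff_ne_zero.2 hdet)
  have hXj : X j = ∑ i, C (M⁻¹ j i) * vv i := by
    symm
    calc ∑ i, C (M⁻¹ j i) * vv i
        = ∑ i, ∑ k, C (M⁻¹ j i * M i k) * X k := by
          refine Finset.sum_congr rfl fun i _ => ?_
          rw [hv i, Finset.mul_sum]
          exact Finset.sum_congr rfl fun k _ => by rw [C_mul, mul_assoc]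
      _ = ∑ k, C ((M⁻¹ * M) j k) * X k := by
          rw [Finset.sum_comm]
          refine Finset.sum_congr rfl fun k _ => ?_
          rw [Matrix.mul_apply, map_sum, Finset.sum_mul]
      _ = X j := by
          rw [hNM]
          rw [Fin.sum_univ_three]
          fin_cases j <;> simp [Matrix.one_apply]
  rw [hXj]
  refine Submodule.sum_mem _ fun i _ => ?_
  rw [← smul_eq_C_mul]
  refine Submodule.smul_mem _ _ (Submodule.subset_span ?_)
  fin_cases i <;> simp [hvv]

lemma monomial_pair (i j : Fin 3) (c : ℂ) :
    (monomial (Finsupp.single i 1 + Finsupp.single j 1) c : Rp) = C c * X i * X j := by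
  have hX : ∀ k : Fin 3, (X k : Rp) = monomial (Finsupp.single k 1) 1 := fun _ => rfl
  rw [hX, hX, C_mul_monomial, monomial_mul]
  norm_num

lemma quad_mem_span (X₁ X₂ Z : Rp) (hX₁ : IsLin X₁) (hX₂ : IsLin X₂) (hZ : IsLin Z)
    (hbasis : LinearIndependent ℂ ![X₁, X₂, Z]) (q : Rp) (hq : IsQuad q) :
    q ∈ Submodule.span ℂ ({X₁^2, X₁*X₂, X₁*Z, X₂^2, X₂*Z, Z^2} : Set Rp) := by
  set L := Submodule.span ℂ ({X₁, X₂, Z} : Set Rp) with hL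
  have hLL : L * L ≤ Submodule.span ℂ ({X₁^2, X₁*X₂, X₁*Z, X₂^2, X₂*Z, Z^2} : Set Rp) := by
    rw [hL, Submodule.span_mul_span, Submodule.span_le]
    rintro x ⟨a, ha, b, hb, rfl⟩
    simp only [Set.mem_insert_iff, Set.mem_singleton_iff] at ha hb
    apply Submodule.subset_span
    simp only [Set.mem_insert_iff, Set.mem_singleton_iff]
    rcases ha with rfl|rfl|rfl <;> rcases hb with rfl|rfl|rfl <;>
      first
        | (left; ring1)
        | (right; left; ring1)
        | (right; right; left; ring1)
        | (right; right; right; left; ring1)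
        | (right; right; right; right; left; ring1)
        | (right; right; right; right; right; ring1)
  have hXL : ∀ k : Fin 3, X k ∈ L := X_mem_span X₁ X₂ Z hX₁ hX₂ hZ hbasis
  rw [q.as_sum]
  refine Submodule.sum_mem _ fun m hm => hLL ?_
  have hdeg : m.degree = 2 := by
    rw [Finsupp.degree_eq_weight_one]
    exact hq (mem_support_iff.1 hm)
  obtain ⟨i, j, rfl⟩ := deg_two_cases m hdeg
  rw [monomial_pair]
  refine Submodule.mul_mem_mul ?_ (hXL j)
  rw [← smul_eq_C_mul]
  exact Submodule.smul_mem _ _ (hXL i)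

lemma extract6 {x m1 m2 m3 m4 m5 m6 : Rp}
    (h : x ∈ Submodule.span ℂ ({m1, m2, m3, m4, m5, m6} : Set Rp)) :
    ∃ a1 a2 a3 a4 a5 a6 : ℂ,
      x = C a1 * m1 + C a2 * m2 + C a3 * m3 + C a4 * m4 + C a5 * m5 + C a6 * m6 := by
  rw [Submodule.mem_span_insert] at h; obtain ⟨a1, z1, h1, rfl⟩ := h
  rw [Submodule.mem_span_insert] at h1; obtain ⟨a2, z2, h2, rfl⟩ := h1
  rw [Submodule.mem_span_insert] at h2; obtain ⟨a3, z3, h3, rfl⟩ := h2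
  rw [Submodule.mem_span_insert] at h3; obtain ⟨a4, z4, h4, rfl⟩ := h3
  rw [Submodule.mem_span_insert] at h4; obtain ⟨a5, z5, h5, rfl⟩ := h4
  rw [Submodule.mem_span_singleton] at h5; obtain ⟨a6, rfl⟩ := h5
  exact ⟨a1, a2, a3, a4, a5, a6, by simp only [smul_eq_C_mul]; ring⟩

end Stmt10Aux

set_option maxHeartbeats 2000000 in
open Stmt10Aux in
theorem stmt10 (X₁ X₂ Z : Rp) (hX₁ : IsLin X₁) (hX₂ : IsLin X₂) (hZ : IsLin Z)
    (hbasis : LinearIndependent ℂ ![X₁, X₂, Z])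
    (q₁₁ q₁₂ q₂₁ q₂₂ : Rp) (hq₁₁ : IsQuad q₁₁) (hq₁₂ : IsQuad q₁₂)
    (hq₂₁ : IsQuad q₂₁) (hq₂₂ : IsQuad q₂₂) :
    ∃ (A B : Matrix.GeneralLinearGroup (Fin 2) ℂ) (α β : ℂˣ) (φr ψc : Fin 2 → Rp),
      (∀ i, IsLin (φr i)) ∧ (∀ i, IsLin (ψc i)) ∧
      ∃ (a b : ℂ) (q₁₂' q₂₁' : Rp),
        q₁₂' ∈ Submodule.span ℂ ({X₁^2, X₁*X₂, X₁*Z, X₂^2, X₂*Z} : Set Rp) ∧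
        IsQuad q₂₁' ∧
        nu2 (B : Matrix (Fin 2) (Fin 2) ℂ) (β : ℂ) ψc *
            !![X₁, Z, 0; q₁₁, q₁₂, Z; q₂₁, q₂₂, X₁] *
            (nu1 (A : Matrix (Fin 2) (Fin 2) ℂ) (α : ℂ) φr)⁻¹ =
          !![X₁, Z, 0; C a * X₂^2, q₁₂', Z; q₂₁', C b * X₂^2, X₁] := by
  obtain ⟨c1, c2, c3, c4, c5, c6, hc⟩ :=
    extract6 (quad_mem_span X₁ X₂ Z hX₁ hX₂ hZ hbasis q₁₁ hq₁₁)
  obtain ⟨e1, e2, e3, e4, e5, e6, he⟩ :=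
    extract6 (quad_mem_span X₁ X₂ Z hX₁ hX₂ hZ hbasis q₁₂ hq₁₂)
  obtain ⟨d1, d2, d3, d4, d5, d6, hd⟩ :=
    extract6 (quad_mem_span X₁ X₂ Z hX₁ hX₂ hZ hbasis q₂₂ hq₂₂)
  -- the row and column operations
  refine ⟨1, 1, 1, 1,
    ![C c3 * X₁ + C c5 * X₂ + C c6 * Z, C d1 * X₁ + C d2 * X₂ + C e6 * Z],
    ![C (-c1) * X₁ + C (-c2) * X₂, C (e6 - d3) * X₁ + C (-d5) * X₂ + C (-d6) * Z],
    ?_, ?_, c4, d4,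
    C e1 * X₁^2 + C e2 * (X₁*X₂) + C (e3 - c1 - d1) * (X₁*Z) + C e4 * X₂^2
      + C (e5 - c2 - d2) * (X₂*Z),
    q₂₁ + ((C (e6 - d3) * X₁ + C (-d5) * X₂ + C (-d6) * Z)
      - (C c3 * X₁ + C c5 * X₂ + C c6 * Z)) * X₁,
    ?_, ?_, ?_⟩
  · intro i; fin_cases i
    · exact ((hX₁.C_mul c3).add (hX₂.C_mul c5)).add (hZ.C_mul c6)
    · exact ((hX₁.C_mul d1).add (hX₂.C_mul d2)).add (hZ.C_mul e6)
  · intro i; fin_cases i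
    · exact (hX₁.C_mul (-c1)).add (hX₂.C_mul (-c2))
    · exact ((hX₁.C_mul (e6 - d3)).add (hX₂.C_mul (-d5))).add (hZ.C_mul (-d6))
  · -- q₁₂' in the 5-element span
    refine Submodule.add_mem _ (Submodule.add_mem _ (Submodule.add_mem _
      (Submodule.add_mem _ ?_ ?_) ?_) ?_) ?_ <;>
      rw [← smul_eq_C_mul] <;>
      exact Submodule.smul_mem _ _ (Submodule.subset_span (by simp))
  · -- IsQuad q₂₁'
    refine hq₂₁.add ?_
    have hlin : IsLin ((C (e6 - d3) * X₁ + C (-d5) * X₂ + C (-d6) * Z)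
        - (C c3 * X₁ + C c5 * X₂ + C c6 * Z)) :=
      (((hX₁.C_mul (e6 - d3)).add (hX₂.C_mul (-d5))).add (hZ.C_mul (-d6))).sub
        (((hX₁.C_mul c3).add (hX₂.C_mul c5)).add (hZ.C_mul c6))
    exact hlin.mul hX₁
  · -- the matrix identity
    have h1 : nu1 ((1 : Matrix.GeneralLinearGroup (Fin 2) ℂ) : Matrix (Fin 2) (Fin 2) ℂ)
        ((1 : ℂˣ) : ℂ)
        ![C c3 * X₁ + C c5 * X₂ + C c6 * Z, C d1 * X₁ + C d2 * X₂ + C e6 * Z] =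
        !![1, 0, 0; 0, 1, 0;
           C c3 * X₁ + C c5 * X₂ + C c6 * Z, C d1 * X₁ + C d2 * X₂ + C e6 * Z, 1] := by
      simp [nu1, Matrix.one_fin_two]
    have h2 : nu2 ((1 : Matrix.GeneralLinearGroup (Fin 2) ℂ) : Matrix (Fin 2) (Fin 2) ℂ)
        ((1 : ℂˣ) : ℂ)
        ![C (-c1) * X₁ + C (-c2) * X₂, C (e6 - d3) * X₁ + C (-d5) * X₂ + C (-d6) * Z] =
        !![1, 0, 0;
           C (-c1) * X₁ + C (-c2) * X₂, 1, 0;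
           C (e6 - d3) * X₁ + C (-d5) * X₂ + C (-d6) * Z, 0, 1] := by
      simp [nu2, Matrix.one_fin_two]
    rw [h1, h2]
    have hinv : (!![1, 0, 0; 0, 1, 0;
           C c3 * X₁ + C c5 * X₂ + C c6 * Z, C d1 * X₁ + C d2 * X₂ + C e6 * Z, 1] :
          Matrix (Fin 3) (Fin 3) Rp)⁻¹ =
        !![1, 0, 0; 0, 1, 0;
           -(C c3 * X₁ + C c5 * X₂ + C c6 * Z), -(C d1 * X₁ + C d2 * X₂ + C e6 * Z), 1] := by
      apply Matrix.inv_eq_right_inv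
      rw [← Matrix.ext_iff]
      intro i j
      fin_cases i <;> fin_cases j <;>
        simp [Matrix.mul_apply, Fin.sum_univ_three, Matrix.one_apply] <;> ring
    rw [hinv]
    rw [← Matrix.ext_iff]
    intro i j
    fin_cases i <;> fin_cases j <;>
      simp [Matrix.mul_apply, Fin.sum_univ_three] <;>
      first
        | ring1
        | linear_combination hc
        | linear_combination hd
        | linear_combination he
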